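/- Let m ≥ 1 and consider the symmetric control system ẋ_t = σ(x_t)a_t on ℝ^{m+1}, where σ(x) = [I_m, 0_m ; 0, x_hᵀ] is the Grushin matrix and the controls take values in the closed unit ball of ℝ^{2m}. Then the minimum time function T to reach the origin is finite on {x : x_h ≠ 0}, satisfies T(x₀) ≤ U(x₀)²/|x_{0,h}| there with U(x) = (|x_h|⁴+4x_v²)^{1/4}, and is locally Lipschitz continuous on the open set {x = (x_h,x_v) ∈ ℝ^{m+1} : x_h ≠ 0}. -/

import Mathlib

open Set MeasureTheory
open scoped RealInnerProductSpace

/-- An admissible trajectory of the Grushin symmetric control system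
`ẋ = σ(x)a = (a₁, ⟪x_h, a₂⟫)`, with controls `a = (a₁,a₂)` in the closed unit
ball of `ℝ^{2m}`. -/
def IsGrushinTraj {m : ℕ} (x₀ : EuclideanSpace ℝ (Fin m) × ℝ)
    (x : ℝ → EuclideanSpace ℝ (Fin m) × ℝ) : Prop :=
  x 0 = x₀ ∧ ContinuousOn x (Ici (0:ℝ)) ∧
    ∃ a : ℝ → EuclideanSpace ℝ (Fin m) × EuclideanSpace ℝ (Fin m),
      Measurable a ∧ (∀ t, ‖(a t).1‖ ^ 2 + ‖(a t).2‖ ^ 2 ≤ 1) ∧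
      ∀ t : ℝ, 0 ≤ t →
        x t = x₀ + ∫ s in (0:ℝ)..t,
          (((a s).1, ⟪(x s).1, (a s).2⟫) : EuclideanSpace ℝ (Fin m) × ℝ)

/-- The set of times at which the origin is reached from `x₀`. -/
def grushinReachTimes {m : ℕ} (x₀ : EuclideanSpace ℝ (Fin m) × ℝ) : Set ℝ :=
  {t | 0 ≤ t ∧ ∃ x : ℝ → EuclideanSpace ℝ (Fin m) × ℝ, IsGrushinTraj x₀ x ∧ x t = 0}

namespace GrushinAux

variable {m : ℕ}

local notation "E" => EuclideanSpace ℝ (Fin m)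

/-- trajectory with constant control `(u,w)` on `[0,T]`, zero control afterwards. -/
noncomputable def bT (y : E × ℝ) (u w : E) (T t : ℝ) : E × ℝ :=
  (y.1 + min t T • u, y.2 + min t T * ⟪y.1, w⟫ + (min t T)^2/2 * ⟪u, w⟫)

lemma bT_cont (y : E × ℝ) (u w : E) (T : ℝ) : Continuous (bT y u w T) := by
  unfold bT; fun_prop

lemma bT_zero (y : E × ℝ) (u w : E) {T : ℝ} (hT : 0 ≤ T) : bT y u w T 0 = y := by
  simp [bT, min_eq_left hT]

lemma intervalIntegral_pair {f : ℝ → E} {g : ℝ → ℝ} {a b : ℝ}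
    (hf : IntervalIntegrable f volume a b) (hg : IntervalIntegrable g volume a b) :
    (∫ s in a..b, ((f s, g s) : E × ℝ)) = (∫ s in a..b, f s, ∫ s in a..b, g s) := by
  rw [intervalIntegral, intervalIntegral, intervalIntegral,
    integral_pair hf.1 hg.1, integral_pair hf.2 hg.2, Prod.mk_sub_mk]

/-- integral of the affine integrand -/
lemma integral_affine (y : E × ℝ) (u w : E) (τ : ℝ) :
    (∫ s in (0:ℝ)..τ, ((u, ⟪y.1, w⟫ + s * ⟪u, w⟫) : E × ℝ))
      = (τ • u, τ * ⟪y.1, w⟫ + τ^2/2 * ⟪u, w⟫) := by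
  have h1 : IntervalIntegrable (fun _ : ℝ => u) volume 0 τ := intervalIntegrable_const
  have h2 : IntervalIntegrable (fun s : ℝ => ⟪y.1, w⟫ + s * ⟪u, w⟫) volume 0 τ := by
    apply Continuous.intervalIntegrable; fun_prop
  rw [intervalIntegral_pair h1 h2]
  congr 1
  · simp
  · rw [intervalIntegral.integral_add intervalIntegrable_const
      (by apply Continuous.intervalIntegrable; fun_prop)]
    rw [intervalIntegral.integral_const, intervalIntegral.integral_mul_const, integral_id]
    simp


/-- the integrand of the block trajectory equals an indicator of a simple affine function -/
lemma bT_integrand_eq (y : E × ℝ) (u w : E) (T : ℝ) (s : ℝ) :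
    (((if s ≤ T then u else 0 : E), ⟪(bT y u w T s).1, (if s ≤ T then w else 0)⟫) : E × ℝ)
      = {x : ℝ | x ≤ T}.indicator (fun s => ((u, ⟪y.1, w⟫ + s * ⟪u, w⟫) : E × ℝ)) s := by
  by_cases h : s ≤ T
  · simp only [if_pos h, indicator_of_mem (show s ∈ {x : ℝ | x ≤ T} from h)]
    have : (bT y u w T s).1 = y.1 + s • u := by simp [bT, min_eq_left h]
    rw [this, inner_add_left, real_inner_smul_left]
  · simp [if_neg h, indicator_of_notMem (show s ∉ {x : ℝ | x ≤ T} from h)]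

lemma bT_integral (y : E × ℝ) (u w : E) {T t : ℝ} (hT : 0 ≤ T) (ht : 0 ≤ t) :
    (∫ s in (0:ℝ)..t,
        (((if s ≤ T then u else 0 : E), ⟪(bT y u w T s).1, (if s ≤ T then w else 0)⟫) : E × ℝ))
      = (min t T • u, min t T * ⟪y.1, w⟫ + (min t T)^2/2 * ⟪u, w⟫) := by
  simp only [bT_integrand_eq]
  rcases le_total t T with h | h
  · have hcg : EqOn
        (fun s => ({x : ℝ | x ≤ T}.indicator (fun s => ((u, ⟪y.1, w⟫ + s * ⟪u, w⟫) : E × ℝ)) s))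
        (fun s => ((u, ⟪y.1, w⟫ + s * ⟪u, w⟫) : E × ℝ)) (uIcc 0 t) := by
      intro s hs
      rw [uIcc_of_le ht] at hs
      have hsT : s ∈ {x : ℝ | x ≤ T} := Set.mem_setOf.2 (hs.2.trans h)
      simp only [indicator_of_mem hsT]
    rw [intervalIntegral.integral_congr hcg, integral_affine, min_eq_left h]
  · rw [intervalIntegral.integral_indicator (f := fun s => ((u, ⟪y.1, w⟫ + s * ⟪u, w⟫) : E × ℝ)) (μ := volume) (Set.mem_Icc.mpr ⟨hT, h⟩), integral_affine, min_eq_right h]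

lemma bT_isTraj (y : E × ℝ) (u w : E) {T : ℝ} (hT : 0 ≤ T)
    (huw : ‖u‖ ^ 2 + ‖w‖ ^ 2 ≤ 1) : IsGrushinTraj y (bT y u w T) := by
  refine ⟨bT_zero y u w hT, (bT_cont y u w T).continuousOn,
    fun s => if s ≤ T then (u, w) else 0, ?_, ?_, ?_⟩
  · exact Measurable.ite measurableSet_Iic measurable_const measurable_const
  · intro s
    by_cases h : s ≤ T <;> simp [h, huw]
  · intro t ht
    have : ∀ s : ℝ, ((((if s ≤ T then ((u, w) : E × E) else 0)).1,
        ⟪(bT y u w T s).1, ((if s ≤ T then ((u, w) : E × E) else 0)).2⟫) : E × ℝ)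
        = (((if s ≤ T then u else 0 : E), ⟪(bT y u w T s).1, (if s ≤ T then w else 0)⟫) : E × ℝ) := by
      intro s; by_cases h : s ≤ T <;> simp [h]
    simp only [this]
    rw [bT_integral y u w hT ht]
    show _ = (y.1 + min t T • u, y.2 + (min t T * ⟪y.1, w⟫ + (min t T)^2/2 * ⟪u, w⟫))
    rw [bT]; ring_nf


lemma bT_eq_add (y : E × ℝ) (u w : E) (T t : ℝ) :
    bT y u w T t = y + (min t T • u, min t T * ⟪y.1, w⟫ + (min t T)^2/2 * ⟪u, w⟫) := by
  rw [bT]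
  apply Prod.ext <;> simp [add_assoc]

lemma norm_le_one_of_sq {r : ℝ} (h : r ^ 2 ≤ 1) (h0 : 0 ≤ r) : r ≤ 1 := by
  nlinarith

/-- concatenating a block trajectory with an arbitrary reaching trajectory -/
lemma concat (y : E × ℝ) (u w : E) {T : ℝ} (hT : 0 ≤ T) (huw : ‖u‖ ^ 2 + ‖w‖ ^ 2 ≤ 1)
    {t₂ : ℝ} (ht₂ : t₂ ∈ grushinReachTimes (bT y u w T T)) :
    T + t₂ ∈ grushinReachTimes y := by
  obtain ⟨ht₂0, x', ⟨hx'0, hx'c, a', ha'm, ha'b, ha'i⟩, hx'T⟩ := ht₂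
  set y' := bT y u w T T with hy'
  refine ⟨by linarith, fun t => if t ≤ T then bT y u w T t else x' (t - T), ⟨?_, ?_, ?_⟩, ?_⟩
  · simp [if_pos hT, bT_zero y u w hT]
  · -- continuity
    apply ContinuousOn.if
    · intro a ha
      have haT : a = T := by
        have := ha.2
        simp only [show {a : ℝ | a ≤ T} = Iic T from rfl, frontier_Iic] at this
        exact this
      subst haT
      simp only [sub_self, hx'0, hy']
    · exact (bT_cont y u w T).continuousOn
    · have hsub : Ici (0:ℝ) ∩ closure {a : ℝ | ¬ a ≤ T} ⊆ Ici T := by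
        intro a ha
        have := ha.2
        simp only [show {a : ℝ | ¬ a ≤ T} = Ioi T from by ext a; simp, closure_Ioi] at this
        exact this
      refine (hx'c.comp ((continuous_id.sub continuous_const).continuousOn) ?_).mono hsub
      intro a ha
      simpa using ha
  · -- the control
    refine ⟨fun s => if s ≤ T then (u, w) else a' (s - T), ?_, ?_, ?_⟩
    · exact Measurable.ite measurableSet_Iic measurable_const
        (ha'm.comp (measurable_id.sub measurable_const))
    · intro s
      by_cases h : s ≤ T
      · simpa [if_pos h] using huw
      · simpa [if_neg h] using ha'b (s - T)
    · intro t ht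
      -- abbreviations
      set z : ℝ → E × ℝ := fun t => if t ≤ T then bT y u w T t else x' (t - T) with hz
      set c : ℝ → E × E := fun s => if s ≤ T then ((u, w) : E × E) else a' (s - T) with hc
      have hzc : ContinuousOn z (Ici (0:ℝ)) := by
        apply ContinuousOn.if
        · intro a ha
          have haT : a = T := by
            have := ha.2
            simp only [show {a : ℝ | a ≤ T} = Iic T from rfl, frontier_Iic] at this
            exact this
          subst haT
          simp only [sub_self, hx'0, hy']
        · exact (bT_cont y u w T).continuousOn
        · have hsub : Ici (0:ℝ) ∩ closure {a : ℝ | ¬ a ≤ T} ⊆ Ici T := by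
            intro a ha
            have := ha.2
            simp only [show {a : ℝ | ¬ a ≤ T} = Ioi T from by ext a; simp, closure_Ioi] at this
            exact this
          refine (hx'c.comp ((continuous_id.sub continuous_const).continuousOn) ?_).mono hsub
          intro a ha
          simpa using ha
      have hcb : ∀ s, ‖(c s).1‖ ^ 2 + ‖(c s).2‖ ^ 2 ≤ 1 := by
        intro s
        by_cases h : s ≤ T
        · simpa [hc, if_pos h] using huw
        · simpa [hc, if_neg h] using ha'b (s - T)
      -- integrability of the integrand on subintervals of [0,∞)
      have hFi : ∀ a b : ℝ, 0 ≤ a → a ≤ b →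
          IntervalIntegrable (fun s => (((c s).1, ⟪(z s).1, (c s).2⟫) : E × ℝ)) volume a b := by
        intro a b ha hab
        rw [intervalIntegrable_iff_integrableOn_Ioc_of_le hab]
        obtain ⟨M, hM⟩ : ∃ M, ∀ s ∈ Icc (0:ℝ) b, ‖z s‖ ≤ M :=
          isCompact_Icc.exists_bound_of_continuousOn (hzc.mono Icc_subset_Ici_self)
        have hIoc : Ioc a b ⊆ Icc 0 b := fun s hs => ⟨ha.trans hs.1.le, hs.2⟩
        have hzm : AEStronglyMeasurable z (volume.restrict (Ioc a b)) :=
          (hzc.mono (fun s hs => ha.trans hs.1.le : Ioc a b ⊆ Ici 0)).aestronglyMeasurable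
            measurableSet_Ioc
        have hcm1 : AEStronglyMeasurable (fun s => (c s).1) (volume.restrict (Ioc a b)) := by
          have : Measurable c := Measurable.ite measurableSet_Iic measurable_const
            (ha'm.comp (measurable_id.sub measurable_const))
          exact ((measurable_fst.comp this).stronglyMeasurable).aestronglyMeasurable
        have hcm2 : AEStronglyMeasurable (fun s => (c s).2) (volume.restrict (Ioc a b)) := by
          have : Measurable c := Measurable.ite measurableSet_Iic measurable_const
            (ha'm.comp (measurable_id.sub measurable_const))
          exact ((measurable_snd.comp this).stronglyMeasurable).aestronglyMeasurable
        have hzm1 : AEStronglyMeasurable (fun s => (z s).1) (volume.restrict (Ioc a b)) :=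
          continuous_fst.comp_aestronglyMeasurable hzm
        refine ⟨hcm1.prodMk (hzm1.inner hcm2), ?_⟩
        refine HasFiniteIntegral.restrict_of_bounded (C := max 1 M) measure_Ioc_lt_top ?_
        filter_upwards [ae_restrict_mem measurableSet_Ioc] with s hs
        have hc1 : ‖(c s).1‖ ≤ 1 := norm_le_one_of_sq
          (le_trans (le_add_of_nonneg_right (sq_nonneg _)) (hcb s)) (norm_nonneg _)
        have hc2 : ‖(c s).2‖ ≤ 1 := norm_le_one_of_sq
          (le_trans (le_add_of_nonneg_left (sq_nonneg _)) (hcb s)) (norm_nonneg _)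
        have hz1 : ‖(z s).1‖ ≤ M := le_trans (norm_fst_le _) (hM s (hIoc hs))
        have hMnn : 0 ≤ M := le_trans (norm_nonneg _) (hM b ⟨ha.trans hab, le_refl b⟩)
        rw [Prod.norm_def]
        apply max_le (le_trans hc1 (le_max_left _ _))
        refine le_trans ?_ (le_max_right 1 M)
        calc ‖⟪(z s).1, (c s).2⟫‖ ≤ ‖(z s).1‖ * ‖(c s).2‖ := norm_inner_le_norm _ _
          _ ≤ M * 1 := mul_le_mul hz1 hc2 (norm_nonneg _) hMnn
          _ = M := mul_one M
      by_cases htT : t ≤ T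
      · -- before the switch
        have hcg : EqOn (fun s => (((c s).1, ⟪(z s).1, (c s).2⟫) : E × ℝ))
            (fun s => (((if s ≤ T then u else 0 : E),
              ⟪(bT y u w T s).1, (if s ≤ T then w else 0)⟫) : E × ℝ)) (uIcc 0 t) := by
          intro s hs
          rw [uIcc_of_le ht] at hs
          have hsT : s ≤ T := hs.2.trans htT
          simp only [hc, hz, if_pos hsT]
        rw [intervalIntegral.integral_congr hcg, bT_integral y u w hT ht]
        show (if t ≤ T then bT y u w T t else x' (t - T)) = _
        rw [if_pos htT, bT_eq_add]
      · -- after the switch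
        push_neg at htT
        rw [← intervalIntegral.integral_add_adjacent_intervals (hFi 0 T le_rfl hT)
          (hFi T t hT htT.le)]
        have h1 : (∫ s in (0:ℝ)..T, (((c s).1, ⟪(z s).1, (c s).2⟫) : E × ℝ)) = y' - y := by
          have hcg : EqOn (fun s => (((c s).1, ⟪(z s).1, (c s).2⟫) : E × ℝ))
              (fun s => (((if s ≤ T then u else 0 : E),
                ⟪(bT y u w T s).1, (if s ≤ T then w else 0)⟫) : E × ℝ)) (uIcc 0 T) := by
            intro s hs
            rw [uIcc_of_le hT] at hs
            simp only [hc, hz, if_pos hs.2]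
          rw [intervalIntegral.integral_congr hcg, bT_integral y u w hT hT, hy',
            bT_eq_add y u w T T]
          abel
        have h2 : (∫ s in T..t, (((c s).1, ⟪(z s).1, (c s).2⟫) : E × ℝ))
            = x' (t - T) - y' := by
          have hcg : ∀ᵐ s ∂(volume : Measure ℝ), s ∈ Set.uIoc T t →
              (((c s).1, ⟪(z s).1, (c s).2⟫) : E × ℝ)
              = (fun σ => (((a' (σ - T)).1, ⟪(x' (σ - T)).1, (a' (σ - T)).2⟫) : E × ℝ)) s := by
            refine Filter.Eventually.of_forall fun s hs => ?_
            rw [uIoc_of_le htT.le] at hs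
            have hsT : ¬ s ≤ T := not_le.2 hs.1
            simp only [hc, hz, if_neg hsT]
          rw [intervalIntegral.integral_congr_ae hcg,
            intervalIntegral.integral_comp_sub_right
              (fun σ => (((a' σ).1, ⟪(x' σ).1, (a' σ).2⟫) : E × ℝ)) T]
          simp only [sub_self]
          rw [ha'i (t - T) (by linarith)]
          abel
        rw [h1, h2]
        show (if t ≤ T then bT y u w T t else x' (t - T)) = _
        rw [if_neg (not_le.2 htT)]
        abel
  · -- reaching the origin at time T + t₂
    show (if T + t₂ ≤ T then bT y u w T (T + t₂) else x' (T + t₂ - T)) = 0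
    rcases eq_or_lt_of_le ht₂0 with h | h
    · subst h
      simp only [add_zero, if_pos le_rfl, ← hy', ← hx'0]
      exact hx'T
    · rw [if_neg (by linarith : ¬ T + t₂ ≤ T), add_sub_cancel_left]
      exact hx'T


lemma reach_bdd (y : E × ℝ) : BddBelow (grushinReachTimes y) := ⟨0, fun _ ht => ht.1⟩

/-- from any point with nonzero horizontal part, the origin is reached in time
`√(‖x_h‖⁴+4x_v²)/‖x_h‖`. -/
lemma reach_mem (x₀ : E × ℝ) (h0 : x₀.1 ≠ 0) :
    Real.sqrt (‖x₀.1‖ ^ 4 + 4 * x₀.2 ^ 2) / ‖x₀.1‖ ∈ grushinReachTimes x₀ := by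
  have hr : 0 < ‖x₀.1‖ := norm_pos_iff.2 h0
  set r := ‖x₀.1‖ with hrdef
  set v := x₀.2 with hvdef
  set D := Real.sqrt (r ^ 4 + 4 * v ^ 2) with hDdef
  have hD : 0 < D := Real.sqrt_pos.2 (by positivity)
  have hD2 : D ^ 2 = r ^ 4 + 4 * v ^ 2 := Real.sq_sqrt (by positivity)
  set α := r ^ 2 / D with hα
  set γ := 2 * v / D with hγ
  set u : E := (-(α / r)) • x₀.1 with hu
  set w : E := (-(γ / r)) • x₀.1 with hw
  set T := D / r with hTdef
  have hT : 0 ≤ T := le_of_lt (div_pos hD hr)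
  have huw : ‖u‖ ^ 2 + ‖w‖ ^ 2 ≤ 1 := by
    rw [hu, hw, norm_smul, norm_smul, Real.norm_eq_abs, Real.norm_eq_abs, mul_pow, mul_pow,
      sq_abs, sq_abs, ← hrdef]
    have : (-(α / r)) ^ 2 * r ^ 2 + (-(γ / r)) ^ 2 * r ^ 2 = 1 := by
      rw [hα, hγ]
      field_simp
      linear_combination (-1 : ℝ) * hD2
    rw [this]
  have hend : bT x₀ u w T T = 0 := by
    rw [bT]
    have hmin : min T T = T := min_self T
    apply Prod.ext
    · show x₀.1 + min T T • u = 0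
      rw [hmin, hu, smul_smul]
      have : T * (-(α / r)) = -1 := by
        rw [hTdef, hα]; field_simp
      rw [this]
      simp
    · show v + min T T * ⟪x₀.1, w⟫ + (min T T) ^ 2 / 2 * ⟪u, w⟫ = 0
      rw [hmin, hu, hw, real_inner_smul_right, real_inner_smul_left, real_inner_smul_right,
        real_inner_self_eq_norm_sq, ← hrdef, hTdef, hα, hγ]
      field_simp
      ring
  exact ⟨hT, bT x₀ u w T, bT_isTraj x₀ u w hT huw, hend⟩

/-- steering from `y` to `y'` and then to the origin -/
lemma steer {y y' : E × ℝ} (h' : y'.1 ≠ 0) {t : ℝ} (ht : t ∈ grushinReachTimes y') :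
    ‖y'.1 - y.1‖ + |y'.2 - y.2| / ‖y'.1‖ + t ∈ grushinReachTimes y := by
  have hr : 0 < ‖y'.1‖ := norm_pos_iff.2 h'
  set T₁ := ‖y'.1 - y.1‖ with hT₁
  set u₁ : E := T₁⁻¹ • (y'.1 - y.1) with hu₁
  set y'' : E × ℝ := (y'.1, y.2) with hy''
  set T₂ := |y'.2 - y.2| / ‖y'.1‖ with hT₂
  set c := (y'.2 - y.2) / (T₂ * ‖y'.1‖ ^ 2) with hc
  set w₂ : E := c • y'.1 with hw₂
  have hT₁0 : 0 ≤ T₁ := norm_nonneg _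
  have hT₂0 : 0 ≤ T₂ := div_nonneg (abs_nonneg _) (norm_nonneg _)
  -- phase 2
  have h2uw : ‖(0:E)‖ ^ 2 + ‖w₂‖ ^ 2 ≤ 1 := by
    rw [norm_zero]
    by_cases hv : y'.2 = y.2
    · have : c = 0 := by rw [hc, hv]; simp
      rw [hw₂, this]; simp
    · have hT₂pos : 0 < T₂ := div_pos (abs_pos.2 (sub_ne_zero.2 hv)) hr
      have hΔ : y'.2 - y.2 ≠ 0 := sub_ne_zero.2 hv
      have h1 : c = (y'.2 - y.2) / (|y'.2 - y.2| * ‖y'.1‖) := by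
        rw [hc, hT₂]; field_simp
      have : ‖w₂‖ ^ 2 = 1 := by
        rw [hw₂, norm_smul, Real.norm_eq_abs, mul_pow, sq_abs, h1, div_pow, mul_pow, sq_abs]
        field_simp
      rw [this]; simp
  have h2end : bT y'' 0 w₂ T₂ T₂ = y' := by
    rw [bT]
    apply Prod.ext
    · show y'.1 + min T₂ T₂ • (0:E) = y'.1
      simp
    · show y.2 + min T₂ T₂ * ⟪y'.1, w₂⟫ + (min T₂ T₂) ^ 2 / 2 * ⟪(0:E), w₂⟫ = y'.2
      rw [min_self, inner_zero_left, hw₂, real_inner_smul_right, real_inner_self_eq_norm_sq]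
      by_cases hv : y'.2 = y.2
      · have hT₂z : T₂ = 0 := by rw [hT₂, hv]; simp
        rw [hT₂z, hv]; ring
      · have hT₂pos : 0 < T₂ := div_pos (abs_pos.2 (sub_ne_zero.2 hv)) hr
        rw [hc]
        field_simp
        ring
  -- phase 1
  have h1uw : ‖u₁‖ ^ 2 + ‖(0:E)‖ ^ 2 ≤ 1 := by
    rw [norm_zero]
    by_cases hh : y'.1 = y.1
    · have : T₁ = 0 := by rw [hT₁, hh]; simp
      rw [hu₁, this]; simp
    · have hT₁pos : 0 < T₁ := norm_pos_iff.2 (sub_ne_zero.2 hh)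
      have : ‖u₁‖ = 1 := by
        rw [hu₁, norm_smul, Real.norm_eq_abs, abs_inv, abs_of_pos hT₁pos, ← hT₁,
          inv_mul_cancel₀ (ne_of_gt hT₁pos)]
      rw [this]; simp
  have h1end : bT y u₁ 0 T₁ T₁ = y'' := by
    rw [bT]
    apply Prod.ext
    · show y.1 + min T₁ T₁ • u₁ = y'.1
      rw [min_self, hu₁, smul_smul]
      by_cases hh : y'.1 = y.1
      · have : T₁ = 0 := by rw [hT₁, hh]; simp
        rw [this, hh]; simp
      · have hT₁pos : 0 < T₁ := norm_pos_iff.2 (sub_ne_zero.2 hh)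
        rw [mul_inv_cancel₀ (ne_of_gt hT₁pos), one_smul]
        abel
    · show y.2 + min T₁ T₁ * ⟪y.1, (0:E)⟫ + (min T₁ T₁) ^ 2 / 2 * ⟪u₁, (0:E)⟫ = y.2
      rw [inner_zero_right, inner_zero_right]; ring
  have h2 : T₂ + t ∈ grushinReachTimes y'' := by
    apply concat y'' 0 w₂ hT₂0 h2uw
    rw [h2end]; exact ht
  have h1 : T₁ + (T₂ + t) ∈ grushinReachTimes y := by
    apply concat y u₁ 0 hT₁0 h1uw
    rw [h1end]; exact h2
  have : ‖y'.1 - y.1‖ + |y'.2 - y.2| / ‖y'.1‖ + t = T₁ + (T₂ + t) := by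
    rw [hT₁, hT₂]; ring
  rw [this]; exact h1

lemma sInf_le_steer {y y' : E × ℝ} (h' : y'.1 ≠ 0)
    (hne : (grushinReachTimes y').Nonempty) :
    sInf (grushinReachTimes y) ≤
      ‖y'.1 - y.1‖ + |y'.2 - y.2| / ‖y'.1‖ + sInf (grushinReachTimes y') := by
  have h1 : ∀ t ∈ grushinReachTimes y',
      sInf (grushinReachTimes y) - (‖y'.1 - y.1‖ + |y'.2 - y.2| / ‖y'.1‖) ≤ t := by
    intro t ht
    have := csInf_le (reach_bdd y) (steer h' ht)
    linarith
  have := le_csInf hne h1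
  linarith

end GrushinAux

/-- for the Grushin system, the minimum time function `T` to reach the
origin is finite on `{x_h ≠ 0}`, satisfies `T(x₀) ≤ U(x₀)²/|x_{0,h}|` there, and is
locally Lipschitz continuous on `{x = (x_h,x_v) : x_h ≠ 0}`. -/
theorem stmt_16 {m : ℕ} (hm : 1 ≤ m)
    (U : EuclideanSpace ℝ (Fin m) × ℝ → ℝ)
    (hU : ∀ x : EuclideanSpace ℝ (Fin m) × ℝ,
      U x = (‖x.1‖ ^ 4 + 4 * x.2 ^ 2) ^ ((1:ℝ)/4)) :
    ∀ x₀ : EuclideanSpace ℝ (Fin m) × ℝ, x₀.1 ≠ 0 →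
      (grushinReachTimes x₀).Nonempty ∧
      sInf (grushinReachTimes x₀) ≤ (U x₀) ^ 2 / ‖x₀.1‖ ∧
      ∃ ε > (0:ℝ), ∃ K : NNReal,
        LipschitzOnWith K (fun y : EuclideanSpace ℝ (Fin m) × ℝ =>
          sInf (grushinReachTimes y)) (Metric.ball x₀ ε) := by
  intro x₀ h0
  have key : ∀ y : EuclideanSpace ℝ (Fin m) × ℝ, y.1 ≠ 0 → (grushinReachTimes y).Nonempty :=
    fun y hy => ⟨_, GrushinAux.reach_mem y hy⟩
  refine ⟨key x₀ h0, ?_, ?_⟩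
  · have h1 := csInf_le (GrushinAux.reach_bdd x₀) (GrushinAux.reach_mem x₀ h0)
    have hX : (0:ℝ) ≤ ‖x₀.1‖ ^ 4 + 4 * x₀.2 ^ 2 := by positivity
    have h2 : U x₀ ^ 2 = Real.sqrt (‖x₀.1‖ ^ 4 + 4 * x₀.2 ^ 2) := by
      rw [hU, Real.sqrt_eq_rpow, ← Real.rpow_natCast (_ ^ ((1:ℝ)/4)) 2, ← Real.rpow_mul hX]
      norm_num
    rw [h2]
    exact h1
  · have hr : 0 < ‖x₀.1‖ := norm_pos_iff.2 h0
    set r := ‖x₀.1‖ with hrdef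
    refine ⟨r/2, by positivity, Real.toNNReal (1 + 2/r), ?_⟩
    apply LipschitzOnWith.of_dist_le_mul
    have hball : ∀ p : EuclideanSpace ℝ (Fin m) × ℝ, p ∈ Metric.ball x₀ (r/2) →
        r/2 ≤ ‖p.1‖ ∧ p.1 ≠ 0 := by
      intro p hp
      have h1 : dist p x₀ < r/2 := Metric.mem_ball.1 hp
      have h2 : ‖p.1 - x₀.1‖ ≤ ‖p - x₀‖ := by
        have : p.1 - x₀.1 = (p - x₀).1 := rfl
        rw [this]; exact norm_fst_le _
      have h3 : ‖x₀.1‖ - ‖p.1‖ ≤ ‖x₀.1 - p.1‖ := norm_sub_norm_le _ _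
      rw [norm_sub_rev] at h3
      rw [dist_eq_norm] at h1
      have h4 : r/2 ≤ ‖p.1‖ := by rw [hrdef] at *; linarith
      exact ⟨h4, fun hz => by rw [hz, norm_zero] at h4; linarith⟩
    -- the one-sided steering estimate
    have hstep : ∀ y z : EuclideanSpace ℝ (Fin m) × ℝ,
        y ∈ Metric.ball x₀ (r/2) → z ∈ Metric.ball x₀ (r/2) →
        sInf (grushinReachTimes y) - sInf (grushinReachTimes z) ≤ (1 + 2/r) * dist y z := by
      intro y z hy hz
      obtain ⟨hz1, hz2⟩ := hball z hz
      have hsteer := GrushinAux.sInf_le_steer (y := y) hz2 (key z hz2)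
      have hd1 : ‖z.1 - y.1‖ ≤ dist y z := by
        rw [dist_comm, dist_eq_norm]
        have : z.1 - y.1 = (z - y).1 := rfl
        rw [this]; exact norm_fst_le _
      have hd2 : |z.2 - y.2| ≤ dist y z := by
        rw [dist_comm, dist_eq_norm]
        have : z.2 - y.2 = (z - y).2 := rfl
        rw [this, ← Real.norm_eq_abs]; exact norm_snd_le _
      have hd3 : |z.2 - y.2| / ‖z.1‖ ≤ dist y z / (r/2) :=
        div_le_div₀ dist_nonneg hd2 (by positivity) hz1
      have hd4 : dist y z / (r/2) = (2/r) * dist y z := by field_simp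
      have : ‖z.1 - y.1‖ + |z.2 - y.2| / ‖z.1‖ ≤ (1 + 2/r) * dist y z := by
        rw [hd4] at hd3; linarith
      linarith
    intro y hy z hz
    rw [Real.dist_eq, Real.coe_toNNReal _ (by positivity : (0:ℝ) ≤ 1 + 2/r)]
    rw [abs_sub_le_iff]
    have h2 := hstep z y hz hy
    rw [dist_comm z y] at h2
    exact ⟨by linarith [hstep y z hy hz], by linarith⟩
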